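/- For any finite multigraph G = (V,E), any orientation D of G, and any finite additive abelian group Γ of order q, the number of nowhere-zero Γ-flows on D equals Σ_{E'⊆E} (−1)^{|E|−|E'|} q^{|E'|+c(E')−|V|}, where c(E') is the number of connected components of the spanning subgraph (V,E'). In particular, this number depends only on G and q, not on the orientation D or on the structure of Γ. -/

import Mathlib

/-- A finite multigraph on vertex type `V` with edge type `E`: each edge `e` has two
(possibly equal) endpoints `fst e` and `snd e`. -/
structure Multigraph (V E : Type) where
  fst : E → V
  snd : E → V

namespace Multigraph

variable {V E : Type}

/-- `a` and `b` are joined by some edge belonging to the edge set `F`. -/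
def edgeRelOn (G : Multigraph V E) (F : Set E) (a b : V) : Prop :=
  ∃ e ∈ F, (G.fst e = a ∧ G.snd e = b) ∨ (G.fst e = b ∧ G.snd e = a)

/-- Reachability in the spanning subgraph `(V, F)`. -/
def Reach (G : Multigraph V E) (F : Set E) : V → V → Prop :=
  Relation.EqvGen (G.edgeRelOn F)

/-- The setoid on `V` whose classes are the connected components of the
spanning subgraph `(V, F)`. -/
def reachSetoid (G : Multigraph V E) (F : Set E) : Setoid V :=
  Relation.EqvGen.setoid (G.edgeRelOn F)

/-- The number of connected components of the spanning subgraph `(V, F)`. -/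
noncomputable def ncomp (G : Multigraph V E) (F : Set E) : ℕ :=
  Nat.card (Quotient (G.reachSetoid F))

/-- The number of connected components of `G`. -/
noncomputable def numComponents (G : Multigraph V E) : ℕ :=
  G.ncomp Set.univ

/-- `G` is connected. -/
def Connected (G : Multigraph V E) : Prop :=
  G.numComponents = 1

/-- An edge is a bridge if deleting it increases the number of connected components. -/
def IsBridge (G : Multigraph V E) (e : E) : Prop :=
  G.numComponents < G.ncomp {e' | e' ≠ e}

/-- `G` has no bridge. -/
def Bridgeless (G : Multigraph V E) : Prop :=
  ∀ e, ¬ G.IsBridge e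

/-- `G` has no loops. -/
def Loopless (G : Multigraph V E) : Prop :=
  ∀ e, G.fst e ≠ G.snd e

/-- Deleting a set `S` of vertices (and all edges meeting `S`). -/
def deleteVerts (G : Multigraph V E) (S : Set V) :
    Multigraph {v // v ∉ S} {e // G.fst e ∉ S ∧ G.snd e ∉ S} where
  fst := fun e => ⟨G.fst e.1, e.2.1⟩
  snd := fun e => ⟨G.snd e.1, e.2.2⟩

/-- A cut-vertex: a vertex whose deletion increases the number of components. -/
def IsCutVertex (G : Multigraph V E) (x : V) : Prop :=
  G.numComponents < (G.deleteVerts {x}).numComponents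

/-- A graph is non-separable if it has at most one vertex and at most one edge, or it is
connected, loopless and has no cut-vertex. -/
def NonSeparable (G : Multigraph V E) : Prop :=
  (Nat.card V ≤ 1 ∧ Nat.card E ≤ 1) ∨
    (G.Connected ∧ G.Loopless ∧ ∀ x, ¬ G.IsCutVertex x)

/-- The degree of a vertex, counted with edge multiplicity; a loop contributes `2`. -/
noncomputable def degree (G : Multigraph V E) (v : V) : ℕ :=
  Nat.card {e | G.fst e = v} + Nat.card {e | G.snd e = v}

/-- The flow polynomial `F(G,q) = ∑_{E'⊆E} (−1)^{|E|−|E'|} q^{|E'|+c(E')−|V|}`,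
where `c(E')` is the number of connected components of the spanning subgraph `(V,E')`. -/
noncomputable def flowPoly (G : Multigraph V E) [Finite V] [Finite E] : Polynomial ℝ :=
  letI : Fintype E := Fintype.ofFinite E
  ∑ E' : Finset E, (-1 : Polynomial ℝ) ^ (Nat.card E - E'.card) *
    Polynomial.X ^ (E'.card + G.ncomp ↑E' - Nat.card V)

/-- A subgraph of a multigraph: a set of vertices and a set of edges with both
endpoints among those vertices. -/
structure Subgraph (G : Multigraph V E) where
  verts : Set V
  edges : Set E
  fst_mem : ∀ ⦃e⦄, e ∈ edges → G.fst e ∈ verts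
  snd_mem : ∀ ⦃e⦄, e ∈ edges → G.snd e ∈ verts

/-- A subgraph, viewed as a multigraph in its own right. -/
def Subgraph.toMultigraph {G : Multigraph V E} (H : G.Subgraph) :
    Multigraph H.verts H.edges where
  fst := fun e => ⟨G.fst e.1, H.fst_mem e.2⟩
  snd := fun e => ⟨G.snd e.1, H.snd_mem e.2⟩

/-- `H` is a connected component of `G`: its vertex set is the set of vertices reachable
from some vertex, and its edges are all the edges of `G` joining its vertices. -/
def IsComponent {G : Multigraph V E} (H : G.Subgraph) : Prop :=
  (∃ v ∈ H.verts, ∀ u, u ∈ H.verts ↔ G.Reach Set.univ v u) ∧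
    ∀ e, e ∈ H.edges ↔ (G.fst e ∈ H.verts ∧ G.snd e ∈ H.verts)

/-- `H` is a block of `G`: a maximal non-separable subgraph. -/
def IsBlock {G : Multigraph V E} (H : G.Subgraph) : Prop :=
  H.toMultigraph.NonSeparable ∧
    ∀ H' : G.Subgraph, H'.toMultigraph.NonSeparable →
      H.verts ⊆ H'.verts → H.edges ⊆ H'.edges → H' = H

/-- A trivial block: a single vertex and no edges. -/
def Subgraph.IsTrivial {G : Multigraph V E} (H : G.Subgraph) : Prop :=
  (∃ v, H.verts = {v}) ∧ H.edges = ∅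

/-- An orientation of a multigraph: each edge is given a tail and a head,
consistent with its two endpoints. -/
structure Orientation (G : Multigraph V E) where
  tail : E → V
  head : E → V
  consistent : ∀ e, (tail e = G.fst e ∧ head e = G.snd e) ∨
    (tail e = G.snd e ∧ head e = G.fst e)

open Classical in
/-- A `Γ`-flow on an orientation `D`: at every vertex, the sum of the values on
the arcs with that tail equals the sum of the values on the arcs with that head. -/
noncomputable def Orientation.IsFlow {G : Multigraph V E} [Fintype E]
    (D : G.Orientation) {Γ : Type} [AddCommGroup Γ] (φ : E → Γ) : Prop :=
  ∀ v : V, ∑ e ∈ Finset.univ.filter (fun e => D.tail e = v), φ e =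
    ∑ e ∈ Finset.univ.filter (fun e => D.head e = v), φ e

/-- Deleting an edge. -/
def deleteEdge (G : Multigraph V E) (e₀ : E) : Multigraph V {e // e ≠ e₀} where
  fst := fun e => G.fst e.1
  snd := fun e => G.snd e.1

/-- Adding a new edge joining `x` and `y`. -/
def addEdge (G : Multigraph V E) (x y : V) : Multigraph V (E ⊕ Unit) where
  fst := Sum.elim G.fst fun _ => x
  snd := Sum.elim G.snd fun _ => y

/-- Contracting a set `F` of edges: vertices joined through `F` are identified,
and the edges of `F` are removed. -/
def contract (G : Multigraph V E) (F : Set E) :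
    Multigraph (Quotient (G.reachSetoid F)) {e // e ∉ F} where
  fst := fun e => Quotient.mk _ (G.fst e.1)
  snd := fun e => Quotient.mk _ (G.snd e.1)

/-- The number of proper colourings of the vertices of `G` with `n` colours. -/
noncomputable def properColorings (G : Multigraph V E) (n : ℕ) : ℕ :=
  Nat.card {f : V → Fin n // ∀ e, f (G.fst e) ≠ f (G.snd e)}

/-- An isomorphism of multigraphs. -/
structure Iso {V' E' : Type} (G : Multigraph V E) (G' : Multigraph V' E') where
  vmap : V ≃ V'
  emap : E ≃ E'
  ends : ∀ e, (G'.fst (emap e) = vmap (G.fst e) ∧ G'.snd (emap e) = vmap (G.snd e)) ∨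
    (G'.fst (emap e) = vmap (G.snd e) ∧ G'.snd (emap e) = vmap (G.fst e))

open Classical in
/-- Subdividing the edge `e₀`: it is replaced by a path of length two through a new vertex. -/
noncomputable def subdivide (G : Multigraph V E) (e₀ : E) :
    Multigraph (V ⊕ Unit) (E ⊕ Unit) where
  fst := Sum.elim (fun e => Sum.inl (G.fst e)) fun _ => Sum.inr ()
  snd := Sum.elim (fun e => if e = e₀ then Sum.inr () else Sum.inl (G.snd e))
    fun _ => Sum.inl (G.snd e₀)

/-- `G` is a subdivision of `H`. -/
inductive IsSubdivisionOf :
    {V E V' E' : Type} → Multigraph V E → Multigraph V' E' → Prop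
  | of_iso {V E V' E'} {G : Multigraph V E} {H : Multigraph V' E'} :
      Iso G H → IsSubdivisionOf G H
  | step {V E V' E'} {G : Multigraph V E} {H : Multigraph V' E'} (e : E) :
      IsSubdivisionOf G H → IsSubdivisionOf (G.subdivide e) H
  | iso_left {V₁ E₁ V₂ E₂ V' E'} {G₁ : Multigraph V₁ E₁} {G₂ : Multigraph V₂ E₂}
      {H : Multigraph V' E'} :
      Iso G₁ G₂ → IsSubdivisionOf G₂ H → IsSubdivisionOf G₁ H

/-- A multigraph is 3-connected if it has at least 4 vertices and remains connected
after deleting any set of fewer than 3 vertices. -/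
def ThreeConnected (G : Multigraph V E) : Prop :=
  4 ≤ Nat.card V ∧ ∀ S : Set V, S.ncard < 3 → (G.deleteVerts S).Connected

/-- `G` is (isomorphic to) the multigraph `Z_k` with two vertices joined by `k`
parallel edges. -/
def IsZk (G : Multigraph V E) (k : ℕ) : Prop :=
  Nat.card V = 2 ∧ Nat.card E = k ∧ G.Loopless

/-- `G` is essentially 3-connected: a subdivision of a 3-connected graph,
or `Z_k` for some `k ≥ 3`. -/
def EssentiallyThreeConnected (G : Multigraph V E) : Prop :=
  (∃ (V' E' : Type) (H : Multigraph V' E'), H.ThreeConnected ∧ G.IsSubdivisionOf H) ∨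
    ∃ k, 3 ≤ k ∧ G.IsZk k

end Multigraph


namespace NZAux
open Multigraph Finset

variable {V E : Type} {G : Multigraph V E}

lemma reach_refl (G : Multigraph V E) (F : Set E) (a : V) : G.Reach F a a :=
  Relation.EqvGen.refl a

lemma rsymm {F : Set E} {a b : V} (h : G.Reach F a b) : G.Reach F b a :=
  Relation.EqvGen.symm a b h

lemma rtrans {F : Set E} {a b c : V} (h : G.Reach F a b) (h' : G.Reach F b c) :
    G.Reach F a c := Relation.EqvGen.trans a b c h h'

lemma reach_insert_cases {F : Set E} {e : E} {a b : V}
    (h : G.Reach (insert e F) a b) :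
    G.Reach F a b ∨ (G.Reach F a (G.fst e) ∧ G.Reach F (G.snd e) b) ∨
      (G.Reach F a (G.snd e) ∧ G.Reach F (G.fst e) b) := by
  induction h with
  | rel x y hxy =>
    obtain ⟨e', he', hc⟩ := hxy
    rcases Set.mem_insert_iff.1 he' with rfl | he'
    · rcases hc with ⟨h1, h2⟩ | ⟨h1, h2⟩
      · exact Or.inr (Or.inl ⟨h1 ▸ reach_refl G F x, h2 ▸ reach_refl G F y⟩)
      · exact Or.inr (Or.inr ⟨h2 ▸ reach_refl G F x, h1 ▸ reach_refl G F y⟩)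
    · exact Or.inl (Relation.EqvGen.rel x y ⟨e', he', hc⟩)
  | refl x => exact Or.inl (reach_refl G F x)
  | symm x y _ ih =>
    rcases ih with h | ⟨h1, h2⟩ | ⟨h1, h2⟩
    · exact Or.inl (rsymm h)
    · exact Or.inr (Or.inr ⟨rsymm h2, rsymm h1⟩)
    · exact Or.inr (Or.inl ⟨rsymm h2, rsymm h1⟩)
  | trans x y z _ _ ih1 ih2 =>
    rcases ih1 with h | ⟨h1, h2⟩ | ⟨h1, h2⟩ <;>
      rcases ih2 with h' | ⟨h1', h2'⟩ | ⟨h1', h2'⟩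
    · exact Or.inl (rtrans h h')
    · exact Or.inr (Or.inl ⟨rtrans h h1', h2'⟩)
    · exact Or.inr (Or.inr ⟨rtrans h h1', h2'⟩)
    · exact Or.inr (Or.inl ⟨h1, rtrans h2 h'⟩)
    · exact Or.inl (rtrans h1 (rtrans (rsymm (rtrans h2 h1')) h2'))
    · exact Or.inl (rtrans h1 h2')
    · exact Or.inr (Or.inr ⟨h1, rtrans h2 h'⟩)
    · exact Or.inl (rtrans h1 h2')
    · exact Or.inl (rtrans h1 (rtrans (rsymm (rtrans h2 h1')) h2'))

end NZAux

namespace NZAux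
open Multigraph Finset

variable {V E : Type} {G : Multigraph V E}

lemma card_aux {α β : Type} [Finite α] (f : α → β) (hs : Function.Surjective f) (a : α)
    (h : ∀ x y, f x = f y → x = y ∨ x = a ∨ y = a) :
    Nat.card α ≤ Nat.card β + 1 := by
  have : Finite β := Finite.of_surjective f hs
  have hinj : Function.Injective (fun x : {x // x ≠ a} => f x.1) := by
    rintro ⟨x, hx⟩ ⟨y, hy⟩ hxy
    rcases h x y hxy with h' | h' | h'
    · exact Subtype.ext h'
    · exact absurd h' hx
    · exact absurd h' hy
  have h1 : Nat.card {x // x ≠ a} ≤ Nat.card β := Nat.card_le_card_of_injective _ hinj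
  classical
  cases nonempty_fintype α
  have h2 : Fintype.card {x // ¬ x = a} = Fintype.card α - Fintype.card {x // x = a} :=
    Fintype.card_subtype_compl _
  rw [Fintype.card_subtype_eq a] at h2
  have h3 : 0 < Fintype.card α := Fintype.card_pos_iff.2 ⟨a⟩
  simp only [Nat.card_eq_fintype_card] at h1 ⊢
  have : Fintype.card {x // x ≠ a} = Fintype.card {x // ¬ x = a} := rfl
  omega

lemma edgeRelOn_mono {F F' : Set E} (h : F ⊆ F') {a b : V} :
    G.edgeRelOn F a b → G.edgeRelOn F' a b := by
  rintro ⟨e, he, hc⟩; exact ⟨e, h he, hc⟩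

lemma ncomp_le_insert (G : Multigraph V E) [Finite V] (F : Set E) (e : E) :
    Nat.card (Quotient (G.reachSetoid F)) ≤ Nat.card (Quotient (G.reachSetoid (insert e F))) + 1 := by
  set s := G.reachSetoid F with hs
  set s' := G.reachSetoid (insert e F) with hs'
  let π : Quotient s → Quotient s' := Quotient.map id
    (fun a b hab => Relation.EqvGen.mono (fun a b => edgeRelOn_mono (Set.subset_insert e F)) a b hab)
  have hsurj : Function.Surjective π := by
    intro q
    obtain ⟨v, rfl⟩ := Quotient.exists_rep q
    exact ⟨Quotient.mk s v, rfl⟩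
  refine card_aux π hsurj (Quotient.mk s (G.fst e)) ?_
  intro x y
  refine Quotient.inductionOn₂ x y (fun u v hxy => ?_)
  have huv : G.Reach (insert e F) u v := Quotient.exact hxy
  rcases reach_insert_cases huv with h | ⟨h1, h2⟩ | ⟨h1, h2⟩
  · exact Or.inl (Quotient.sound h)
  · exact Or.inr (Or.inl (Quotient.sound h1))
  · exact Or.inr (Or.inr (Quotient.sound (rsymm h2)))

lemma reach_empty_eq {a b : V} (h : G.Reach (∅ : Set E) a b) : a = b := by
  induction h with
  | rel x y hxy => obtain ⟨e, he, -⟩ := hxy; simp at he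
  | refl x => rfl
  | symm x y _ ih => exact ih.symm
  | trans x y z _ _ ih1 ih2 => exact ih1.trans ih2

lemma ncomp_coe_empty (G : Multigraph V E) :
    Nat.card (Quotient (G.reachSetoid (∅ : Set E))) = Nat.card V := by
  refine Nat.card_congr (Equiv.symm (Equiv.ofBijective (Quotient.mk _) ⟨?_, ?_⟩))
  · intro a b h
    exact reach_empty_eq (Quotient.exact h)
  · intro q
    obtain ⟨v, rfl⟩ := Quotient.exists_rep q
    exact ⟨v, rfl⟩

lemma card_V_le_ncomp (G : Multigraph V E) [Fintype V] [Fintype E] (E' : Finset E) :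
    Fintype.card V ≤ E'.card + G.ncomp ↑E' := by
  classical
  induction E' using Finset.induction_on with
  | empty =>
    simp only [Finset.card_empty, Finset.coe_empty, zero_add, ncomp]
    rw [ncomp_coe_empty G, Nat.card_eq_fintype_card]
  | @insert a s ha ih =>
    have h1 := ncomp_le_insert G (↑s : Set E) a
    rw [Finset.card_insert_of_notMem ha]
    have : (↑(insert a s) : Set E) = insert a (↑s : Set E) := Finset.coe_insert a s
    unfold ncomp at *
    rw [this]
    omega

end NZAux
namespace NZAux
open Multigraph Finset Classical

variable {V E : Type} [Fintype V] [Fintype E] {G : Multigraph V E}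
variable {Γ : Type} [AddCommGroup Γ]

noncomputable def bndHom (D : G.Orientation) (Γ : Type) [AddCommGroup Γ] (E' : Finset E) :
    (↥E' → Γ) →+ (V → Γ) where
  toFun ψ := fun v => (∑ e ∈ univ.filter (fun e : ↥E' => D.tail e.1 = v), ψ e)
    - ∑ e ∈ univ.filter (fun e : ↥E' => D.head e.1 = v), ψ e
  map_zero' := by funext v; simp
  map_add' ψ χ := by
    funext v
    simp only [Pi.add_apply, Finset.sum_add_distrib]
    abel

@[simp] lemma bndHom_apply (D : G.Orientation) (E' : Finset E) (ψ : ↥E' → Γ) (v : V) :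
    bndHom D Γ E' ψ v = (∑ e ∈ univ.filter (fun e : ↥E' => D.tail e.1 = v), ψ e)
      - ∑ e ∈ univ.filter (fun e : ↥E' => D.head e.1 = v), ψ e := rfl

noncomputable def clsumHom (G : Multigraph V E) (Γ : Type) [AddCommGroup Γ] (E' : Finset E) :
    (V → Γ) →+ (Quotient (G.reachSetoid ↑E') → Γ) where
  toFun f := fun c => ∑ v ∈ univ.filter (fun v => Quotient.mk (G.reachSetoid ↑E') v = c), f v
  map_zero' := by funext c; simp
  map_add' f g := by
    funext c
    simp [Finset.sum_add_distrib]

@[simp] lemma clsumHom_apply (E' : Finset E) (f : V → Γ) (c : Quotient (G.reachSetoid ↑E')) :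
    clsumHom G Γ E' f c
      = ∑ v ∈ univ.filter (fun v => Quotient.mk (G.reachSetoid ↑E') v = c), f v := rfl

lemma sum_extend (E' : Finset E) (φ : E → Γ) (hφ : ∀ e ∉ E', φ e = 0) (p : E → Prop) :
    ∑ e ∈ univ.filter (fun e : ↥E' => p e.1), φ e.1 = ∑ e ∈ univ.filter p, φ e := by
  classical
  rw [Finset.sum_filter, Finset.sum_filter,
    Finset.sum_coe_sort E' (fun e => if p e then φ e else 0)]
  refine Finset.sum_subset (Finset.subset_univ E') fun e _ he => ?_
  simp [hφ e he]

lemma mk_tail_head (D : G.Orientation) (E' : Finset E) (e : ↥E') :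
    Quotient.mk (G.reachSetoid ↑E') (D.tail e.1)
      = Quotient.mk (G.reachSetoid ↑E') (D.head e.1) := by
  apply Quotient.sound
  rcases D.consistent e.1 with ⟨h1, h2⟩ | ⟨h1, h2⟩
  · exact Relation.EqvGen.rel _ _ ⟨e.1, Finset.mem_coe.2 e.2, Or.inl ⟨h1.symm, h2.symm⟩⟩
  · exact Relation.EqvGen.rel _ _ ⟨e.1, Finset.mem_coe.2 e.2, Or.inr ⟨h2.symm, h1.symm⟩⟩

lemma sum_fiber_swap (E' : Finset E) (g : ↥E' → V) (ψ : ↥E' → Γ)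
    (c : Quotient (G.reachSetoid ↑E')) :
    ∑ v ∈ univ.filter (fun v => Quotient.mk (G.reachSetoid ↑E') v = c),
      (∑ e ∈ univ.filter (fun e : ↥E' => g e = v), ψ e)
    = ∑ e ∈ univ.filter (fun e : ↥E' => Quotient.mk (G.reachSetoid ↑E') (g e) = c), ψ e := by
  classical
  rw [Finset.sum_congr rfl
    (fun v _ => Finset.sum_filter (fun e : ↥E' => g e = v) ψ), Finset.sum_comm]
  rw [Finset.sum_congr rfl (fun e _ => Finset.sum_ite_eq
    (univ.filter (fun v => Quotient.mk (G.reachSetoid ↑E') v = c)) (g e) (fun _ => ψ e))]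
  rw [← Finset.sum_filter]
  refine Finset.sum_congr (Finset.filter_congr fun e _ => ?_) fun _ _ => rfl
  simp

lemma range_le_ker (D : G.Orientation) (E' : Finset E) :
    (bndHom D Γ E').range ≤ (clsumHom G Γ E' (V := V)).ker := by
  rintro - ⟨ψ, rfl⟩
  rw [AddMonoidHom.mem_ker]
  funext c
  rw [clsumHom_apply]
  simp only [bndHom_apply]
  rw [Finset.sum_sub_distrib, sum_fiber_swap E' (fun e => D.tail e.1) ψ c,
    sum_fiber_swap E' (fun e => D.head e.1) ψ c, Pi.zero_apply, sub_eq_zero]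
  exact Finset.sum_congr
    (Finset.filter_congr fun e _ => by rw [mk_tail_head D E' e]) fun _ _ => rfl

lemma delta_mem (D : G.Orientation) (E' : Finset E) {u w : V}
    (h : G.Reach ↑E' u w) (g : Γ) :
    (fun v => (if v = u then g else 0) - if v = w then g else 0) ∈ (bndHom D Γ E').range := by
  induction h with
  | rel u w huw =>
    obtain ⟨e, he, hc⟩ := huw
    have heE : e ∈ E' := Finset.mem_coe.1 he
    set ψ : ↥E' → Γ := fun e' => if e' = (⟨e, heE⟩ : ↥E') then g else 0 with hψ
    have hb : bndHom D Γ E' ψ = fun v =>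
        (if v = D.tail e then g else 0) - if v = D.head e then g else 0 := by
      funext v
      rw [bndHom_apply]
      congr 1
      · rw [Finset.sum_ite_eq' _ (⟨e, heE⟩ : ↥E') (fun _ => g)]
        simp [eq_comm]
      · rw [Finset.sum_ite_eq' _ (⟨e, heE⟩ : ↥E') (fun _ => g)]
        simp [eq_comm]
    have hX : (fun v => (if v = D.tail e then g else 0) - if v = D.head e then g else 0)
        ∈ (bndHom D Γ E').range := ⟨ψ, hb⟩
    have hth : (D.tail e = u ∧ D.head e = w) ∨ (D.tail e = w ∧ D.head e = u) := by
      rcases D.consistent e with ⟨h1, h2⟩ | ⟨h1, h2⟩ <;> rcases hc with ⟨h3, h4⟩ | ⟨h3, h4⟩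
      · exact Or.inl ⟨h1.trans h3, h2.trans h4⟩
      · exact Or.inr ⟨h1.trans h3, h2.trans h4⟩
      · exact Or.inr ⟨h1.trans h4, h2.trans h3⟩
      · exact Or.inl ⟨h1.trans h4, h2.trans h3⟩
    rcases hth with ⟨h1, h2⟩ | ⟨h1, h2⟩
    · rwa [h1, h2] at hX
    · rw [h1, h2] at hX
      have := AddSubgroup.neg_mem _ hX
      convert this using 1
      funext v
      simp only [Pi.neg_apply, neg_sub]
  | refl u =>
    have : (fun v => (if v = u then g else 0) - if v = u then g else 0) = (0 : V → Γ) := by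
      funext v; simp
    rw [this]
    exact AddSubgroup.zero_mem _
  | symm u w _ ih =>
    have := AddSubgroup.neg_mem _ ih
    convert this using 1
    funext v
    simp only [Pi.neg_apply, neg_sub]
  | trans u w x _ _ ih1 ih2 =>
    have := AddSubgroup.add_mem _ ih1 ih2
    convert this using 1
    funext v
    simp only [Pi.add_apply]
    abel

lemma ker_le_range (D : G.Orientation) (E' : Finset E) :
    (clsumHom G Γ E' (V := V)).ker ≤ (bndHom D Γ E').range := by
  intro f hf
  rw [AddMonoidHom.mem_ker] at hf
  have hrepr : f = ∑ u : V, (fun v => (if v = u then f u else 0)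
      - if v = (Quotient.mk (G.reachSetoid ↑E') u).out then f u else 0) := by
    funext v
    rw [Finset.sum_apply, Finset.sum_sub_distrib]
    have h1 : ∑ u : V, (if v = u then f u else 0) = f v := by
      rw [Finset.sum_ite_eq univ v f]; simp
    have h2 : ∑ u : V, (if v = (Quotient.mk (G.reachSetoid ↑E') u).out then f u else 0)
        = 0 := by
      classical
      rw [← Finset.sum_fiberwise univ (fun u => Quotient.mk (G.reachSetoid ↑E') u)
        (fun u => if v = (Quotient.mk (G.reachSetoid ↑E') u).out then f u else 0)]
      refine Finset.sum_eq_zero fun c _ => ?_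
      have hcongr : ∀ u ∈ univ.filter (fun u => Quotient.mk (G.reachSetoid ↑E') u = c),
          (if v = (Quotient.mk (G.reachSetoid ↑E') u).out then f u else 0)
            = (if v = c.out then f u else 0) := fun u hu => by
        rw [(Finset.mem_filter.1 hu).2]
      rw [Finset.sum_congr rfl hcongr]
      by_cases hv : v = c.out
      · have := congrFun hf c
        rw [clsumHom_apply] at this
        simpa [hv] using this
      · simp [hv]
    rw [h1, h2, sub_zero]
  rw [hrepr]
  refine AddSubgroup.sum_mem _ fun u _ => ?_
  exact delta_mem D E' (rsymm (@Quotient.mk_out V (G.reachSetoid ↑E') u)) (f u)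

lemma clsum_surjective (G : Multigraph V E) (E' : Finset E) :
    Function.Surjective (clsumHom G Γ E' (V := V)) := by
  classical
  intro g
  refine ⟨fun v => if (Quotient.mk (G.reachSetoid ↑E') v).out = v
    then g (Quotient.mk (G.reachSetoid ↑E') v) else 0, ?_⟩
  funext c
  rw [clsumHom_apply]
  have hcongr : ∀ v ∈ univ.filter (fun v => Quotient.mk (G.reachSetoid ↑E') v = c),
      (if (Quotient.mk (G.reachSetoid ↑E') v).out = v
        then g (Quotient.mk (G.reachSetoid ↑E') v) else 0)
      = (if v = c.out then g c else 0) := by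
    intro v hv
    have h' := (Finset.mem_filter.1 hv).2
    rw [h']
    by_cases h2 : c.out = v
    · rw [if_pos h2, if_pos h2.symm]
    · rw [if_neg h2, if_neg (fun h => h2 h.symm)]
  rw [Finset.sum_congr rfl hcongr, Finset.sum_ite_eq' _ c.out (fun _ => g c)]
  rw [if_pos]
  simp [Quotient.out_eq]

lemma card_ker_bnd (D : G.Orientation) (E' : Finset E) [Fintype Γ] :
    Nat.card (bndHom D Γ E').ker * Fintype.card Γ ^ Fintype.card V
      = Fintype.card Γ ^ (E'.card + G.ncomp ↑E') := by
  classical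
  have hrk : (clsumHom G Γ E' (V := V)).ker = (bndHom D Γ E').range :=
    le_antisymm (ker_le_range D E') (range_le_ker D E')
  have lag1 := AddSubgroup.card_eq_card_quotient_mul_card_addSubgroup (bndHom D Γ E').ker
  have e1 : Nat.card ((↥E' → Γ) ⧸ (bndHom D Γ E').ker) = Nat.card (bndHom D Γ E').range :=
    Nat.card_congr (QuotientAddGroup.quotientKerEquivRange _).toEquiv
  have lag2 := AddSubgroup.card_eq_card_quotient_mul_card_addSubgroup
    (clsumHom G Γ E' (V := V)).ker
  have e2 : Nat.card ((V → Γ) ⧸ (clsumHom G Γ E' (V := V)).ker)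
      = Nat.card (Quotient (G.reachSetoid ↑E') → Γ) := by
    refine Nat.card_congr ((QuotientAddGroup.quotientKerEquivRange _).toEquiv.trans ?_)
    refine (Equiv.subtypeEquivProp ?_).trans (Equiv.Set.univ _)
    rw [AddMonoidHom.range_eq_top.2 (clsum_surjective G E')]
    rfl
  have c1 : Nat.card (↥E' → Γ) = Fintype.card Γ ^ E'.card := by
    rw [Nat.card_fun, Nat.card_eq_fintype_card, Nat.card_eq_fintype_card, Fintype.card_coe]
  have c2 : Nat.card (V → Γ) = Fintype.card Γ ^ Fintype.card V := by
    rw [Nat.card_fun, Nat.card_eq_fintype_card, Nat.card_eq_fintype_card]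
  have c3 : Nat.card (Quotient (G.reachSetoid ↑E') → Γ)
      = Fintype.card Γ ^ G.ncomp ↑E' := by
    rw [Nat.card_fun, Nat.card_eq_fintype_card]
    rfl
  rw [c1, e1, ← hrk] at lag1
  rw [c2, e2, c3] at lag2
  rw [lag2, pow_add, lag1]
  ring

end NZAux
namespace NZAux
open Multigraph Finset Classical

variable {V E : Type} [Fintype V] [Fintype E] {G : Multigraph V E}
variable {Γ : Type} [AddCommGroup Γ]

lemma isFlow_iff (D : G.Orientation) (E' : Finset E) (φ : E → Γ)
    (hφ : ∀ e ∉ E', φ e = 0) :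
    D.IsFlow φ ↔ bndHom D Γ E' (fun e => φ e.1) = 0 := by
  unfold Orientation.IsFlow
  constructor
  · intro h
    funext v
    rw [bndHom_apply, sum_extend E' φ hφ (fun e => D.tail e = v),
      sum_extend E' φ hφ (fun e => D.head e = v), h v, Pi.zero_apply, sub_self]
  · intro h v
    have h2 := congrFun h v
    rw [bndHom_apply, sum_extend E' φ hφ (fun e => D.tail e = v),
      sum_extend E' φ hφ (fun e => D.head e = v), Pi.zero_apply, sub_eq_zero] at h2
    exact h2

noncomputable def flowEquiv (D : G.Orientation) (E' : Finset E) :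
    {φ : E → Γ // D.IsFlow φ ∧ ∀ e ∉ E', φ e = 0} ≃ (bndHom D Γ E').ker where
  toFun φ := ⟨fun e => φ.1 e.1, by
    rw [AddMonoidHom.mem_ker]
    exact (isFlow_iff D E' φ.1 φ.2.2).1 φ.2.1⟩
  invFun ψ := ⟨fun e => if h : e ∈ E' then ψ.1 ⟨e, h⟩ else 0, by
    have hvan : ∀ e ∉ E', (if h : e ∈ E' then ψ.1 ⟨e, h⟩ else 0) = 0 := by
      intro e he; simp [he]
    refine ⟨?_, hvan⟩
    rw [isFlow_iff D E' _ hvan]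
    have heq : (fun e : ↥E' => if h : e.1 ∈ E' then ψ.1 ⟨e.1, h⟩ else 0) = ψ.1 := by
      funext e; simp [e.2]
    rw [heq]
    exact AddMonoidHom.mem_ker.1 ψ.2⟩
  left_inv φ := Subtype.ext (funext fun e => by
    by_cases h : e ∈ E'
    · simp [h]
    · simp [h, (φ.2.2 e h).symm])
  right_inv ψ := Subtype.ext (funext fun e => by simp [e.2])

lemma count_supported [Fintype Γ] (D : G.Orientation) (E' : Finset E) :
    Nat.card {φ : E → Γ // D.IsFlow φ ∧ ∀ e ∉ E', φ e = 0}
      = Fintype.card Γ ^ (E'.card + G.ncomp ↑E' - Fintype.card V) := by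
  have h := card_ker_bnd (Γ := Γ) D E'
  rw [← Nat.card_congr (flowEquiv (Γ := Γ) D E')] at h
  have hle := card_V_le_ncomp G E'
  have hq : 0 < Fintype.card Γ ^ Fintype.card V := pow_pos Fintype.card_pos _
  have hsplit : Fintype.card Γ ^ (E'.card + G.ncomp ↑E')
      = Fintype.card Γ ^ (E'.card + G.ncomp ↑E' - Fintype.card V)
        * Fintype.card Γ ^ Fintype.card V := by
    rw [← pow_add, Nat.sub_add_cancel hle]
  rw [hsplit] at h
  exact Nat.eq_of_mul_eq_mul_right hq h

end NZAux

open Multigraph in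
/-- For any orientation `D` of a finite multigraph `G = (V,E)` and any
finite additive abelian group `Γ` of order `q`, the number of nowhere-zero `Γ`-flows on
`D` equals `Σ_{E'⊆E} (−1)^{|E|−|E'|} q^{|E'|+c(E')−|V|}`; in particular it depends only
on `G` and `q`. -/
theorem card_nowhere_zero_flows {V E : Type} [Fintype V] [Fintype E]
    (G : Multigraph V E) (D : G.Orientation) (Γ : Type) [AddCommGroup Γ] [Fintype Γ] :
    (Nat.card {φ : E → Γ // D.IsFlow φ ∧ ∀ e, φ e ≠ 0} : ℤ) =
      ∑ E' : Finset E, (-1 : ℤ) ^ (Fintype.card E - E'.card) *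
        (Fintype.card Γ : ℤ) ^ (E'.card + G.ncomp ↑E' - Fintype.card V) := by
  classical
  set Flows : Finset (E → Γ) := Finset.univ.filter (fun φ => D.IsFlow φ) with hFlows
  have key : ∀ E' : Finset E,
      ((Fintype.card Γ : ℤ) ^ (E'.card + G.ncomp ↑E' - Fintype.card V))
        = ∑ φ ∈ Flows, (if ∀ e ∉ E', φ e = 0 then (1 : ℤ) else 0) := by
    intro E'
    rw [Finset.sum_boole, hFlows, Finset.filter_filter]
    have hnat : (Finset.univ.filter (fun a : E → Γ => D.IsFlow a ∧ ∀ e ∉ E', a e = 0)).card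
        = Fintype.card Γ ^ (E'.card + G.ncomp ↑E' - Fintype.card V) := by
      rw [← Fintype.card_subtype, ← Nat.card_eq_fintype_card, NZAux.count_supported D E']
    rw [hnat]
    push_cast
    ring
  calc (Nat.card {φ : E → Γ // D.IsFlow φ ∧ ∀ e, φ e ≠ 0} : ℤ)
      = ∑ φ ∈ Flows, (if ∀ e, φ e ≠ 0 then (1 : ℤ) else 0) := by
        rw [Finset.sum_boole, hFlows, Finset.filter_filter,
          Nat.card_eq_fintype_card, Fintype.card_subtype]
    _ = ∑ φ ∈ Flows, ∑ E' : Finset E,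
          (if ∀ e ∉ E', φ e = 0 then (-1 : ℤ) ^ (Fintype.card E - E'.card) else 0) := by
        refine Finset.sum_congr rfl fun φ _ => ?_
        have hswap : ∑ E' : Finset E,
            (if ∀ e ∉ E', φ e = 0 then (-1 : ℤ) ^ (Fintype.card E - E'.card) else 0)
            = ∑ B : Finset E,
              (if ∀ e ∉ Bᶜ, φ e = 0 then (-1 : ℤ) ^ (Fintype.card E - Bᶜ.card) else 0) :=
          (Fintype.sum_bijective (·ᶜ) compl_involutive.bijective _ _ fun B => rfl).symm
        rw [hswap]
        have hsimp : ∀ B : Finset E,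
            (if ∀ e ∉ Bᶜ, φ e = 0 then (-1 : ℤ) ^ (Fintype.card E - Bᶜ.card) else 0)
            = (if ∀ e ∈ B, φ e = 0 then (-1 : ℤ) ^ B.card else 0) := by
          intro B
          have h1 : (∀ e ∉ Bᶜ, φ e = 0) ↔ ∀ e ∈ B, φ e = 0 := by
            constructor
            · intro h e he
              exact h e (by simp [Finset.mem_compl, he])
            · intro h e he
              exact h e (by simpa [Finset.mem_compl] using he)
          have h2 : Fintype.card E - Bᶜ.card = B.card := by
            have := Finset.card_compl B
            have hle := Finset.card_le_univ B
            omega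
          exact if_congr h1 (by rw [h2]) rfl
        rw [Finset.sum_congr rfl fun B _ => hsimp B]
        have hpw : Finset.univ.filter (fun B : Finset E => ∀ e ∈ B, φ e = 0)
            = (Finset.univ.filter (fun e => φ e = 0)).powerset := by
          ext B
          simp [Finset.mem_powerset, Finset.subset_iff]
        rw [← Finset.sum_filter, hpw, Finset.sum_powerset_neg_one_pow_card]
        have hcond : (Finset.univ.filter (fun e => φ e = 0) = ∅) ↔ ∀ e, φ e ≠ 0 := by
          rw [Finset.filter_eq_empty_iff]
          simp
        by_cases h : ∀ e, φ e ≠ 0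
        · rw [if_pos (hcond.2 h), if_pos h]
        · rw [if_neg (fun hc => h (hcond.1 hc)), if_neg h]
    _ = ∑ E' : Finset E, ∑ φ ∈ Flows,
          (if ∀ e ∉ E', φ e = 0 then (-1 : ℤ) ^ (Fintype.card E - E'.card) else 0) :=
        Finset.sum_comm
    _ = ∑ E' : Finset E, (-1 : ℤ) ^ (Fintype.card E - E'.card) *
          (Fintype.card Γ : ℤ) ^ (E'.card + G.ncomp ↑E' - Fintype.card V) := by
        refine Finset.sum_congr rfl fun E' _ => ?_
        rw [key E', Finset.mul_sum]
        refine Finset.sum_congr rfl fun φ _ => ?_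
        by_cases h : ∀ e ∉ E', φ e = 0 <;> simp [h]
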